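/- Let D = {(x_t,y_t) : t = 1,…,T} ⊆ ℝ^n × ℝ^n be a finite set with associated matrices X, Y ∈ ℝ^{n×T} and Z, W ∈ ℝ^{ℓ×n}. Then the minimal and maximal linear processes associated with H_D satisfy graph L_-(H_D) = ker [Z −W] = {(x,y) : Zx = Wy} and graph L_+(H_D) = im [X; Y] = {(Xv, Yv) : v ∈ ℝ^T}. -/

import Mathlib

open Matrix Set Pointwise

/-- A set-valued map from `ℝ^n` to subsets of `ℝ^n`. -/
abbrev SVMap (n : ℕ) := (Fin n → ℝ) → Set (Fin n → ℝ)

/-- The graph of a set-valued map. -/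
def graphOf {n : ℕ} (H : SVMap n) : Set ((Fin n → ℝ) × (Fin n → ℝ)) :=
  {p | p.2 ∈ H p.1}

/-- The set-valued map associated with a graph. -/
def ofGraph {n : ℕ} (G : Set ((Fin n → ℝ) × (Fin n → ℝ))) : SVMap n :=
  fun x => {y | (x, y) ∈ G}

/-- A convex cone: a nonempty convex set closed under nonnegative scalar multiplication. -/
def IsConvexCone {V : Type*} [AddCommGroup V] [Module ℝ V] (C : Set V) : Prop :=
  C.Nonempty ∧ Convex ℝ C ∧ ∀ c : ℝ, 0 ≤ c → ∀ x ∈ C, c • x ∈ C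

/-- A convex process: a set-valued map whose graph is a convex cone. -/
def IsConvexProcess {n : ℕ} (H : SVMap n) : Prop :=
  IsConvexCone (graphOf H)

/-- A linear process: a set-valued map whose graph is a linear subspace. -/
def IsLinearProcess {n : ℕ} (H : SVMap n) : Prop :=
  ∃ S : Submodule ℝ ((Fin n → ℝ) × (Fin n → ℝ)), graphOf H = (S : Set _)

/-- The domain of a set-valued map. -/
def domOf {n : ℕ} (H : SVMap n) : Set (Fin n → ℝ) := {x | (H x).Nonempty}

/-- The image of a set-valued map. -/
def imOf {n : ℕ} (H : SVMap n) : Set (Fin n → ℝ) := {y | ∃ x, y ∈ H x}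

/-- The reachable set: states reachable from the origin by a finite trajectory. -/
def reachSet {n : ℕ} (H : SVMap n) : Set (Fin n → ℝ) :=
  {ξ | ∃ (q : ℕ) (x : ℕ → (Fin n → ℝ)),
    x 0 = 0 ∧ x q = ξ ∧ ∀ k, k < q → x (k + 1) ∈ H (x k)}

/-- The null-controllable set: states steered to the origin by a finite trajectory. -/
def nullSet {n : ℕ} (H : SVMap n) : Set (Fin n → ℝ) :=
  {ξ | ∃ (q : ℕ) (x : ℕ → (Fin n → ℝ)),
    x 0 = ξ ∧ x q = 0 ∧ ∀ k, k < q → x (k + 1) ∈ H (x k)}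

/-- The feasible set: states from which an infinite trajectory emanates. -/
def feasSet {n : ℕ} (H : SVMap n) : Set (Fin n → ℝ) :=
  {ξ | ∃ x : ℕ → (Fin n → ℝ), x 0 = ξ ∧ ∀ k, x (k + 1) ∈ H (x k)}

/-- `H` is reachable if every feasible state is reachable. -/
def IsReachable {n : ℕ} (H : SVMap n) : Prop := feasSet H ⊆ reachSet H

/-- `H` is null-controllable if every feasible state is null-controllable. -/
def IsNullControllable {n : ℕ} (H : SVMap n) : Prop := feasSet H ⊆ nullSet H

/-- The minimal linear process `L_-` associated with `H`: graph `L_- = lin(graph H) = (-graph H) ∩ graph H`. -/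
def Lminus {n : ℕ} (H : SVMap n) : SVMap n := ofGraph ((-(graphOf H)) ∩ graphOf H)

/-- The maximal linear process `L_+` associated with `H`: graph `L_+ = Lin(graph H) = graph H - graph H`. -/
def Lplus {n : ℕ} (H : SVMap n) : SVMap n := ofGraph (graphOf H - graphOf H)

/-- The negative dual process: `p ∈ H^-(q)` iff `⟨p,x⟩ ≥ ⟨q,y⟩` for all `(x,y) ∈ graph H`. -/
def dualNeg {n : ℕ} (H : SVMap n) : SVMap n :=
  fun q => {p | ∀ x y, y ∈ H x → q ⬝ᵥ y ≤ p ⬝ᵥ x}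

/-- The positive dual process: `p ∈ H^+(q)` iff `⟨p,x⟩ ≤ ⟨q,y⟩` for all `(x,y) ∈ graph H`. -/
def dualPos {n : ℕ} (H : SVMap n) : SVMap n :=
  fun q => {p | ∀ x y, y ∈ H x → p ⬝ᵥ x ≤ q ⬝ᵥ y}

/-- `(lam, ξ)` is an eigenpair of `G` if `ξ ≠ 0` and `lam • ξ ∈ G(ξ)`. -/
def IsEigenpair {n : ℕ} (G : SVMap n) (lam : ℝ) (ξ : Fin n → ℝ) : Prop :=
  ξ ≠ 0 ∧ lam • ξ ∈ G ξ

/-- The conic hull: all conic (nonnegative) combinations of elements of `S`. -/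
def coneHull {V : Type*} [AddCommGroup V] [Module ℝ V] (S : Set V) : Set V :=
  {x | ∃ (k : ℕ) (c : Fin k → ℝ) (f : Fin k → V),
    (∀ i, 0 ≤ c i) ∧ (∀ i, f i ∈ S) ∧ x = ∑ i, c i • f i}

/-- The most powerful unfalsified process `H_D`: the convex process with graph `cone D`. -/
def mpup {n : ℕ} (D : Set ((Fin n → ℝ) × (Fin n → ℝ))) : SVMap n := ofGraph (coneHull D)

/-- The inner product on `ℝ^n × ℝ^n`. -/
def pairDot {n : ℕ} (p q : (Fin n → ℝ) × (Fin n → ℝ)) : ℝ := p.1 ⬝ᵥ q.1 + p.2 ⬝ᵥ q.2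

/-- The positive polar cone of a subset of `ℝ^n × ℝ^n`. -/
def polarPos {n : ℕ} (C : Set ((Fin n → ℝ) × (Fin n → ℝ))) :
    Set ((Fin n → ℝ) × (Fin n → ℝ)) :=
  {η | ∀ d ∈ C, 0 ≤ pairDot d η}

/-- The negative polar cone of a subset of `ℝ^n × ℝ^n`. -/
def polarNeg {n : ℕ} (C : Set ((Fin n → ℝ) × (Fin n → ℝ))) :
    Set ((Fin n → ℝ) × (Fin n → ℝ)) :=
  {η | ∀ d ∈ C, pairDot d η ≤ 0}

/-- The data set `D = {(x_t, y_t)}` whose elements are the column pairs of `X` and `Y`. -/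
def colPairs {n T : ℕ} (X Y : Matrix (Fin n) (Fin T) ℝ) :
    Set ((Fin n → ℝ) × (Fin n → ℝ)) :=
  {p | ∃ t : Fin T, p = (fun i => X i t, fun i => Y i t)}

/-- The rows of the matrix `[Z −W]`, viewed as pairs `(z_i, -w_i)` in `ℝ^n × ℝ^n`. -/
def rowPairsZW {m n : ℕ} (Z W : Matrix (Fin m) (Fin n) ℝ) :
    Set ((Fin n → ℝ) × (Fin n → ℝ)) :=
  {p | ∃ i : Fin m, p = (fun j => Z i j, fun j => -W i j)}

/-- `X ℝ_+^T`: the image of the nonnegative orthant under `X`. -/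
def posImage {n T : ℕ} (X : Matrix (Fin n) (Fin T) ℝ) : Set (Fin n → ℝ) :=
  {x | ∃ v : Fin T → ℝ, (∀ t, 0 ≤ v t) ∧ x = X *ᵥ v}

/-- The set-valued map `S ↦ W^{-1}(Z S)`. -/
def mapWiZ {m n : ℕ} (Z W : Matrix (Fin m) (Fin n) ℝ) :
    Set (Fin n → ℝ) → Set (Fin n → ℝ) :=
  fun S => {y | ∃ x ∈ S, W *ᵥ y = Z *ᵥ x}

/-- The set-valued map `S ↦ Z^{-1}(W S)`. -/
def mapZiW {m n : ℕ} (Z W : Matrix (Fin m) (Fin n) ℝ) :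
    Set (Fin n → ℝ) → Set (Fin n → ℝ) :=
  fun S => {y | ∃ x ∈ S, Z *ᵥ y = W *ᵥ x}

/-- The set-valued map `S ↦ Y(X^{-1} S)`. -/
def mapYXi {n T : ℕ} (X Y : Matrix (Fin n) (Fin T) ℝ) :
    Set (Fin n → ℝ) → Set (Fin n → ℝ) :=
  fun S => {y | ∃ v : Fin T → ℝ, X *ᵥ v ∈ S ∧ y = Y *ᵥ v}

/-- The set-valued map `S ↦ X(Y^{-1} S)`. -/
def mapXYi {n T : ℕ} (X Y : Matrix (Fin n) (Fin T) ℝ) :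
    Set (Fin n → ℝ) → Set (Fin n → ℝ) :=
  fun S => {y | ∃ v : Fin T → ℝ, Y *ᵥ v ∈ S ∧ y = X *ᵥ v}

/-- The image of a set under a set-valued map. -/
def imageSV {n : ℕ} (H : SVMap n) (S : Set (Fin n → ℝ)) : Set (Fin n → ℝ) :=
  {y | ∃ x ∈ S, y ∈ H x}

/-- The inverse of a set-valued map. -/
def invSV {n : ℕ} (H : SVMap n) : SVMap n := fun y => {x | y ∈ H x}

/-- The linear map `(a, b) ↦ (b, -a)` on `ℝ^n × ℝ^n`. -/
def flipMap {n : ℕ} : ((Fin n → ℝ) × (Fin n → ℝ)) → ((Fin n → ℝ) × (Fin n → ℝ)) :=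
  fun p => (p.2, -p.1)

/-- The orthogonal complement of a subset of `ℝ^n × ℝ^n`. -/
def orthPair {n : ℕ} (C : Set ((Fin n → ℝ) × (Fin n → ℝ))) :
    Set ((Fin n → ℝ) × (Fin n → ℝ)) :=
  {q | ∀ p ∈ C, pairDot p q = 0}

/-- The dual linear process `L^⊥`, with graph `{(b, -a) : (a, b) ∈ (graph L)^⊥}`. -/
def perpProcess {n : ℕ} (L : SVMap n) : SVMap n :=
  ofGraph (flipMap '' orthPair (graphOf L))

/-- The orthogonal complement of a subset of `ℝ^n`. -/
def orthVec {n : ℕ} (S : Set (Fin n → ℝ)) : Set (Fin n → ℝ) :=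
  {x | ∀ y ∈ S, x ⬝ᵥ y = 0}


section AuxProof

open Finset

variable {V : Type*} [AddCommGroup V] [Module ℝ V]

lemma mem_coneHull_of_mem {S : Set V} {x : V} (hx : x ∈ S) : x ∈ coneHull S :=
  ⟨1, fun _ => 1, fun _ => x, fun _ => zero_le_one, fun _ => hx, by simp⟩

lemma coneHull_range_eq {k : ℕ} (f : Fin k → V) :
    coneHull (Set.range f) = {x | ∃ c : Fin k → ℝ, (∀ i, 0 ≤ c i) ∧ x = ∑ i, c i • f i} := by
  classical
  ext x
  constructor
  · rintro ⟨kk, c, g, hc, hg, rfl⟩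
    choose j hj using hg
    refine ⟨fun t => ∑ i ∈ univ.filter fun i => j i = t, c i,
      fun t => Finset.sum_nonneg fun i _ => hc i, ?_⟩
    rw [← Finset.sum_fiberwise univ j (fun i => c i • g i)]
    refine Finset.sum_congr rfl fun t _ => ?_
    rw [Finset.sum_smul]
    refine Finset.sum_congr rfl fun i hi => ?_
    rw [Finset.mem_filter] at hi
    rw [← hj i, hi.2]
  · rintro ⟨c, hc, rfl⟩
    exact ⟨k, c, f, hc, fun i => ⟨i, rfl⟩, rfl⟩

lemma caratheodory_cone {k : ℕ}
    (f : Fin k → V) (c : Fin k → ℝ) (hc : ∀ i, 0 ≤ c i) :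
    ∃ (s : Finset (Fin k)) (d : Fin k → ℝ),
      LinearIndependent ℝ (fun i : s => f i) ∧ (∀ i, 0 ≤ d i) ∧ (∀ i ∉ s, d i = 0) ∧
      ∑ i, d i • f i = ∑ i, c i • f i := by
  classical
  suffices H : ∀ (N : ℕ) (c : Fin k → ℝ), (∀ i, 0 ≤ c i) →
      (univ.filter fun i => c i ≠ 0).card ≤ N →
      ∃ (s : Finset (Fin k)) (d : Fin k → ℝ),
        LinearIndependent ℝ (fun i : s => f i) ∧ (∀ i, 0 ≤ d i) ∧ (∀ i ∉ s, d i = 0) ∧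
        ∑ i, d i • f i = ∑ i, c i • f i by
    exact H _ c hc le_rfl
  intro N
  induction N with
  | zero =>
    intro c hc hcard
    have hc0 : ∀ i, c i = 0 := by
      intro i
      by_contra h
      have hmem : i ∈ univ.filter fun i => c i ≠ 0 := by simp [h]
      have := Finset.card_pos.mpr ⟨i, hmem⟩
      omega
    refine ⟨∅, c, ?_, hc, fun i _ => hc0 i, rfl⟩
    exact linearIndependent_empty_type
  | succ N ih =>
    intro c hc hcard
    set s : Finset (Fin k) := univ.filter (fun i => c i ≠ 0) with hs
    by_cases hli : LinearIndependent ℝ (fun i : s => f i)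
    · refine ⟨s, c, hli, hc, fun i hi => ?_, rfl⟩
      by_contra h
      exact hi (by simp [hs, h])
    · obtain ⟨g, hgsum, i0, hgi0⟩ := Fintype.not_linearIndependent_iff.mp hli
      set ε : ℝ := if 0 < g i0 then 1 else -1 with hε
      set a : Fin k → ℝ := fun i => if h : i ∈ s then ε * g ⟨i, h⟩ else 0 with ha
      have hai0 : 0 < a (i0 : Fin k) := by
        have : a (i0 : Fin k) = ε * g i0 := by simp [ha, i0.2]
        rw [this, hε]
        rcases lt_trichotomy (g i0) 0 with h | h | h
        · rw [if_neg (by linarith)]; linarith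
        · exact absurd h hgi0
        · rw [if_pos h]; linarith
      have hasum : ∑ i, a i • f i = 0 := by
        rw [← Finset.sum_subset (Finset.subset_univ s) (fun i _ hi => by simp [ha, dif_neg hi])]
        rw [← Finset.sum_attach s (fun i => a i • f i)]
        have heach : ∀ i : s, a (i : Fin k) • f (i : Fin k) = ε • (g i • f (i : Fin k)) := by
          intro i
          rw [smul_smul]
          congr 1
          simp [ha, i.2]
        rw [Finset.sum_congr rfl (fun i _ => heach i), ← Finset.smul_sum]
        rw [← Finset.univ_eq_attach] at *
        rw [show (∑ i : s, g i • f (i : Fin k)) = 0 from hgsum, smul_zero]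
      have hne : (univ.filter fun i => 0 < a i).Nonempty := ⟨i0, by simp [hai0]⟩
      obtain ⟨i1, hi1mem, hi1min⟩ := Finset.exists_min_image _ (fun i => c i / a i) hne
      rw [Finset.mem_filter] at hi1mem
      have hai1 : 0 < a i1 := hi1mem.2
      set t := c i1 / a i1 with ht
      have ht0 : 0 ≤ t := div_nonneg (hc _) hai1.le
      set c' : Fin k → ℝ := fun i => c i - t * a i with hc'
      have hc'0 : ∀ i, 0 ≤ c' i := by
        intro i
        rcases lt_or_ge 0 (a i) with h | h
        · have hmin := hi1min i (Finset.mem_filter.mpr ⟨Finset.mem_univ _, h⟩)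
          have : t * a i ≤ c i := by
            rw [← le_div_iff₀ h]; exact hmin
          simp only [hc']; linarith
        · have : t * a i ≤ 0 := mul_nonpos_of_nonneg_of_nonpos ht0 h
          have hci := hc i
          simp only [hc']; linarith
      have hi1s : i1 ∈ s := by
        by_contra h
        have : a i1 = 0 := by simp [ha, dif_neg h]
        rw [this] at hai1; exact lt_irrefl _ hai1
      have hsupp : (univ.filter fun i => c' i ≠ 0) ⊆ s.erase i1 := by
        intro i hi
        rw [Finset.mem_filter] at hi
        rw [Finset.mem_erase]
        constructor
        · rintro rfl
          apply hi.2
          simp only [hc', ht]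
          rw [div_mul_cancel₀ _ hai1.ne', sub_self]
        · by_contra h
          have hci : c i = 0 := by
            by_contra h2
            exact h (by simp [hs, h2])
          have hai : a i = 0 := by simp [ha, dif_neg h]
          exact hi.2 (by simp [hc', hci, hai])
      have hcard' : (univ.filter fun i => c' i ≠ 0).card ≤ N := by
        have h1 : (s.erase i1).card < s.card := Finset.card_erase_lt_of_mem hi1s
        have h2 := Finset.card_le_card hsupp
        omega
      have hsum' : ∑ i, c' i • f i = ∑ i, c i • f i := by
        calc ∑ i, c' i • f i = ∑ i, (c i • f i - t • (a i • f i)) := by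
              refine Finset.sum_congr rfl fun i _ => ?_
              simp only [hc']
              rw [sub_smul, smul_smul]
          _ = ∑ i, c i • f i - t • ∑ i, a i • f i := by
              rw [Finset.sum_sub_distrib, Finset.smul_sum]
          _ = ∑ i, c i • f i := by rw [hasum, smul_zero, sub_zero]
      obtain ⟨s', d, h₁, h₂, h₃, h₄⟩ := ih c' hc'0 hcard'
      exact ⟨s', d, h₁, h₂, h₃, h₄.trans hsum'⟩

lemma isClosed_coneCombos {V : Type*} [NormedAddCommGroup V] [NormedSpace ℝ V]
    [FiniteDimensional ℝ V] {k : ℕ} (f : Fin k → V) :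
    IsClosed {x : V | ∃ c : Fin k → ℝ, (∀ i, 0 ≤ c i) ∧ x = ∑ i, c i • f i} := by
  classical
  have key : {x : V | ∃ c : Fin k → ℝ, (∀ i, 0 ≤ c i) ∧ x = ∑ i, c i • f i} =
      ⋃ s ∈ {s : Finset (Fin k) | LinearIndependent ℝ (fun i : s => f i)},
        {x : V | ∃ d : Fin k → ℝ, (∀ i, 0 ≤ d i) ∧ (∀ i ∉ s, d i = 0) ∧ x = ∑ i, d i • f i} := by
    ext x
    simp only [Set.mem_iUnion, Set.mem_setOf_eq]
    constructor
    · rintro ⟨c, hc, rfl⟩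
      obtain ⟨s, d, hli, hd, hd0, hsum⟩ := caratheodory_cone f c hc
      exact ⟨s, hli, d, hd, hd0, hsum.symm⟩
    · rintro ⟨s, _, d, hd, _, rfl⟩
      exact ⟨d, hd, rfl⟩
  rw [key]
  refine Set.Finite.isClosed_biUnion (Set.toFinite _) (fun s hs => ?_)
  let F : (s → ℝ) →ₗ[ℝ] V :=
    { toFun := fun e => ∑ i : s, e i • f (i : Fin k)
      map_add' := fun e₁ e₂ => by simp [add_smul, Finset.sum_add_distrib]
      map_smul' := fun r e => by simp [smul_smul, Finset.smul_sum] }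
  have himg : {x : V | ∃ d : Fin k → ℝ, (∀ i, 0 ≤ d i) ∧ (∀ i ∉ s, d i = 0) ∧ x = ∑ i, d i • f i}
      = F '' {e : s → ℝ | ∀ i, 0 ≤ e i} := by
    ext x
    constructor
    · rintro ⟨d, hd, hd0, rfl⟩
      refine ⟨fun i => d (i : Fin k), fun i => hd _, ?_⟩
      show ∑ i : s, d (i : Fin k) • f (i : Fin k) = ∑ i, d i • f i
      rw [Finset.sum_coe_sort s (fun i => d i • f i)]
      exact Finset.sum_subset (Finset.subset_univ s)
        (fun i _ hi => by rw [hd0 i hi, zero_smul])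
    · rintro ⟨e, he, rfl⟩
      refine ⟨fun i => if h : i ∈ s then e ⟨i, h⟩ else 0,
        fun i => ?_, fun i hi => dif_neg hi, ?_⟩
      · dsimp only
        split
        · exact he _
        · exact le_refl 0
      · show F e = ∑ i, (if h : i ∈ s then e ⟨i, h⟩ else 0) • f i
        rw [← Finset.sum_subset (Finset.subset_univ s)
          (fun i _ hi => by rw [dif_neg hi, zero_smul])]
        rw [← Finset.sum_coe_sort s (fun i => (if h : i ∈ s then e ⟨i, h⟩ else 0) • f i)]
        exact (Finset.sum_congr rfl (fun i _ => by rw [dif_pos i.2])).symm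
  rw [himg]
  have hker : LinearMap.ker F = ⊥ := by
    rw [LinearMap.ker_eq_bot']
    intro e he0
    funext i
    exact Fintype.linearIndependent_iff.mp hs e he0 i
  have horth : IsClosed {e : s → ℝ | ∀ i, 0 ≤ e i} := by
    have : {e : s → ℝ | ∀ i, 0 ≤ e i} = ⋂ i, {e | 0 ≤ e i} := by
      ext e; simp [Set.mem_iInter]
    rw [this]
    exact isClosed_iInter fun i => isClosed_le continuous_const (continuous_apply i)
  exact (F.isClosedEmbedding_of_injective hker).isClosedMap _ horth

lemma pairDot_comm {n : ℕ} (p q : (Fin n → ℝ) × (Fin n → ℝ)) : pairDot p q = pairDot q p := by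
  simp [pairDot, dotProduct_comm]

def pairDotL {n : ℕ} (p : (Fin n → ℝ) × (Fin n → ℝ)) :
    ((Fin n → ℝ) × (Fin n → ℝ)) →ₗ[ℝ] ℝ :=
  { toFun := fun q => pairDot p q
    map_add' := fun a b => by
      simp [pairDot, dotProduct_add]; ring
    map_smul' := fun r a => by
      simp [pairDot, dotProduct_smul]; ring }

lemma pairDot_sum_smul {n k : ℕ} (p : (Fin n → ℝ) × (Fin n → ℝ)) (c : Fin k → ℝ)
    (g : Fin k → (Fin n → ℝ) × (Fin n → ℝ)) :
    pairDot p (∑ i, c i • g i) = ∑ i, c i * pairDot p (g i) := by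
  have h := map_sum (pairDotL p) (fun i => c i • g i) Finset.univ
  simp only [_root_.map_smul, smul_eq_mul] at h
  exact h

noncomputable def phiPair {n : ℕ} :
    ((Fin n → ℝ) × (Fin n → ℝ)) ≃ₗ[ℝ] EuclideanSpace ℝ (Fin n ⊕ Fin n) :=
  { toFun := fun p => (WithLp.equiv 2 _).symm (Sum.elim p.1 p.2)
    invFun := fun x => (fun i => x (Sum.inl i), fun i => x (Sum.inr i))
    map_add' := fun p q => by ext j; cases j <;> rfl
    map_smul' := fun r p => by ext j; cases j <;> rfl
    left_inv := fun p => rfl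
    right_inv := fun x => by ext j; cases j <;> rfl }

lemma phiPair_inner {n : ℕ} (p q : (Fin n → ℝ) × (Fin n → ℝ)) :
    (inner ℝ (phiPair p) (phiPair q) : ℝ) = pairDot p q := by
  simp [phiPair, PiLp.inner_apply, RCLike.inner_apply, Fintype.sum_sum_type, pairDot,
    dotProduct, WithLp.equiv, Equiv.refl_apply, Sum.elim_inl, Sum.elim_inr]
  congr 1 <;> exact Finset.sum_congr rfl fun _ _ => mul_comm _ _

lemma coneHull_subset_polarPos_polarPos {n : ℕ} (D : Set ((Fin n → ℝ) × (Fin n → ℝ))) :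
    coneHull D ⊆ polarPos (polarPos D) := by
  rintro x ⟨k, c, g, hc, hg, rfl⟩ η hη
  rw [pairDot_sum_smul]
  exact Finset.sum_nonneg fun i _ =>
    mul_nonneg (hc i) (by rw [pairDot_comm]; exact hη _ (hg i))

lemma polarPos_polarPos_subset_coneHull {n k : ℕ} (f : Fin k → (Fin n → ℝ) × (Fin n → ℝ)) :
    polarPos (polarPos (Set.range f)) ⊆ coneHull (Set.range f) := by
  classical
  intro p hp
  by_contra hpc
  set C' : Set (EuclideanSpace ℝ (Fin n ⊕ Fin n)) :=
    {x | ∃ c : Fin k → ℝ, (∀ i, 0 ≤ c i) ∧ x = ∑ i, c i • (phiPair (f i))} with hC'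
  set K : ConvexCone ℝ (EuclideanSpace ℝ (Fin n ⊕ Fin n)) :=
    { carrier := C'
      smul_mem' := by
        rintro r hr x ⟨c, hc, rfl⟩
        refine ⟨fun i => r * c i, fun i => mul_nonneg hr.le (hc i), ?_⟩
        rw [Finset.smul_sum]
        exact Finset.sum_congr rfl fun i _ => by dsimp only; rw [smul_smul]
      add_mem' := by
        rintro x ⟨c, hc, rfl⟩ y ⟨c', hc', rfl⟩
        exact ⟨fun i => c i + c' i, fun i => add_nonneg (hc i) (hc' i),
          by rw [← Finset.sum_add_distrib]
             exact Finset.sum_congr rfl fun i _ => (add_smul _ _ _).symm⟩ } with hK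
  have hKset : (K : Set (EuclideanSpace ℝ (Fin n ⊕ Fin n))) = C' := rfl
  have hcl : IsClosed (K : Set (EuclideanSpace ℝ (Fin n ⊕ Fin n))) := by
    rw [hKset, hC']; exact isClosed_coneCombos _
  have hne : (K : Set (EuclideanSpace ℝ (Fin n ⊕ Fin n))).Nonempty :=
    ⟨0, show (0 : EuclideanSpace ℝ (Fin n ⊕ Fin n)) ∈ C' from ⟨0, fun i => le_rfl, by simp⟩⟩
  have hbK : phiPair p ∉ K := by
    intro hb
    have hb' : phiPair p ∈ C' := hb
    obtain ⟨c, hc, hcsum⟩ := hb'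
    apply hpc
    refine ⟨k, c, f, hc, fun i => ⟨i, rfl⟩, ?_⟩
    apply phiPair.injective
    rw [hcsum, map_sum]
    exact Finset.sum_congr rfl fun i _ => by rw [_root_.map_smul]
  obtain ⟨y, hy1, hy2⟩ := ProperCone.hyperplane_separation'
    (⟨K.toPointedCone (show (0 : EuclideanSpace ℝ (Fin n ⊕ Fin n)) ∈ C' from
      ⟨0, fun i => le_rfl, by simp⟩), hcl⟩ : ProperCone ℝ _) hbK
  set η := phiPair.symm y with hη
  have hyeq : y = phiPair η := (phiPair.apply_symm_apply y).symm
  have hηpolar : η ∈ polarPos (Set.range f) := by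
    rintro d ⟨i, rfl⟩
    have hd : phiPair (f i) ∈ K := by
      show phiPair (f i) ∈ C'
      refine ⟨fun j => if j = i then 1 else 0, fun j => by dsimp only; split <;> norm_num, ?_⟩
      simp [ite_smul]
    have h0 := hy1 _ hd
    rw [hyeq, phiPair_inner] at h0
    exact h0
  have h0 := hp η hηpolar
  rw [hyeq, phiPair_inner] at hy2
  exact absurd h0 (not_le.mpr (by rw [pairDot_comm]; exact hy2))

lemma graphOf_ofGraph {n : ℕ} (G : Set ((Fin n → ℝ) × (Fin n → ℝ))) :
    graphOf (ofGraph G) = G := by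
  ext p
  simp [graphOf, ofGraph]

lemma pairDot_rowpair {n m : ℕ} (Z W : Matrix (Fin m) (Fin n) ℝ) (i : Fin m)
    (p : (Fin n → ℝ) × (Fin n → ℝ)) :
    pairDot p (fun j => Z i j, fun j => -W i j) = (Z *ᵥ p.1) i - (W *ᵥ p.2) i := by
  simp only [pairDot, Matrix.mulVec, dotProduct]
  rw [sub_eq_add_neg, ← Finset.sum_neg_distrib]
  congr 1 <;> exact Finset.sum_congr rfl fun j _ => by ring

lemma sum_smul_colPairs {n T : ℕ} (X Y : Matrix (Fin n) (Fin T) ℝ) (v : Fin T → ℝ) :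
    ∑ t, v t • ((fun i => X i t, fun i => Y i t) : (Fin n → ℝ) × (Fin n → ℝ))
      = (X *ᵥ v, Y *ᵥ v) := by
  rw [Prod.ext_iff]
  constructor <;>
  · simp only [Prod.fst_sum, Prod.snd_sum, Prod.smul_fst, Prod.smul_snd]
    funext i
    simp [Finset.sum_apply, Matrix.mulVec, dotProduct, mul_comm]

lemma colPairs_eq_range {n T : ℕ} (X Y : Matrix (Fin n) (Fin T) ℝ) :
    colPairs X Y = Set.range (fun t : Fin T =>
      ((fun i => X i t, fun i => Y i t) : (Fin n → ℝ) × (Fin n → ℝ))) := by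
  ext p
  simp [colPairs, Set.mem_range, eq_comm]

lemma rowPairsZW_eq_range {n m : ℕ} (Z W : Matrix (Fin m) (Fin n) ℝ) :
    rowPairsZW Z W = Set.range (fun i : Fin m =>
      ((fun j => Z i j, fun j => -W i j) : (Fin n → ℝ) × (Fin n → ℝ))) := by
  ext p
  simp [rowPairsZW, Set.mem_range, eq_comm]

end AuxProof

/-- The minimal and maximal linear processes of `H_D`:
`graph L_-(H_D) = ker [Z −W]` and `graph L_+(H_D) = im [X; Y]`. -/
theorem stmt9 {n T m : ℕ} (X Y : Matrix (Fin n) (Fin T) ℝ) (Z W : Matrix (Fin m) (Fin n) ℝ)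
    (hZW : polarPos (colPairs X Y) = coneHull (rowPairsZW Z W)) :
    graphOf (Lminus (mpup (colPairs X Y))) = {p | Z *ᵥ p.1 = W *ᵥ p.2} ∧
    graphOf (Lplus (mpup (colPairs X Y))) = {p | ∃ v : Fin T → ℝ, p = (X *ᵥ v, Y *ᵥ v)} := by
  classical
  have hgraph : graphOf (mpup (colPairs X Y)) = coneHull (colPairs X Y) :=
    graphOf_ofGraph _
  set C := coneHull (colPairs X Y) with hCdef
  have hC : C = {p : (Fin n → ℝ) × (Fin n → ℝ) |
      ∃ v : Fin T → ℝ, (∀ t, 0 ≤ v t) ∧ p = (X *ᵥ v, Y *ᵥ v)} := by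
    rw [hCdef, colPairs_eq_range, coneHull_range_eq]
    ext p
    simp only [Set.mem_setOf_eq]
    constructor
    · rintro ⟨v, hv, rfl⟩
      exact ⟨v, hv, (sum_smul_colPairs X Y v)⟩
    · rintro ⟨v, hv, rfl⟩
      exact ⟨v, hv, (sum_smul_colPairs X Y v).symm⟩
  have bipolar : C = polarPos (polarPos (colPairs X Y)) := by
    rw [hCdef, colPairs_eq_range]
    exact Set.Subset.antisymm (coneHull_subset_polarPos_polarPos _)
      (polarPos_polarPos_subset_coneHull _)
  constructor
  · have hL : graphOf (Lminus (mpup (colPairs X Y))) = (-C) ∩ C := by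
      rw [Lminus, graphOf_ofGraph, hgraph]
    rw [hL]
    ext p
    simp only [Set.mem_inter_iff, Set.mem_neg, Set.mem_setOf_eq]
    constructor
    · rintro ⟨hneg, hpos⟩
      funext j
      have hrow : (((fun jj => Z j jj, fun jj => -W j jj)) :
          (Fin n → ℝ) × (Fin n → ℝ)) ∈ polarPos (colPairs X Y) := by
        rw [hZW]
        exact mem_coneHull_of_mem ⟨j, rfl⟩
      have h1 := coneHull_subset_polarPos_polarPos (colPairs X Y) hpos _ hrow
      have h2 := coneHull_subset_polarPos_polarPos (colPairs X Y) hneg _ hrow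
      have h2' : pairDot (((fun jj => Z j jj, fun jj => -W j jj)) :
          (Fin n → ℝ) × (Fin n → ℝ)) (-p)
          = -pairDot (((fun jj => Z j jj, fun jj => -W j jj)) :
          (Fin n → ℝ) × (Fin n → ℝ)) p :=
        map_neg (pairDotL _) p
      rw [h2'] at h2
      have heq : pairDot (((fun jj => Z j jj, fun jj => -W j jj)) :
          (Fin n → ℝ) × (Fin n → ℝ)) p = 0 := le_antisymm (by linarith) h1
      rw [pairDot_comm, pairDot_rowpair] at heq
      linarith
    · intro hZp
      have key : ∀ q : (Fin n → ℝ) × (Fin n → ℝ), Z *ᵥ q.1 = W *ᵥ q.2 → q ∈ C := by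
        intro q hq
        rw [bipolar]
        intro η hη
        rw [hZW, rowPairsZW_eq_range, coneHull_range_eq] at hη
        obtain ⟨c, hc, rfl⟩ := hη
        rw [pairDot_comm, pairDot_sum_smul]
        apply Finset.sum_nonneg
        intro i _
        rw [pairDot_rowpair, hq, sub_self, mul_zero]
      refine ⟨?_, key p hZp⟩
      apply key (-p)
      show Z *ᵥ (-p.1) = W *ᵥ (-p.2)
      rw [Matrix.mulVec_neg, Matrix.mulVec_neg, hZp]
  · have hL : graphOf (Lplus (mpup (colPairs X Y))) = C - C := by
      rw [Lplus, graphOf_ofGraph, hgraph]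
    rw [hL]
    ext p
    rw [Set.mem_sub]
    simp only [Set.mem_setOf_eq]
    constructor
    · rintro ⟨a, ha, b, hb, rfl⟩
      rw [hC] at ha hb
      obtain ⟨v, hv, rfl⟩ := ha
      obtain ⟨w, hw, rfl⟩ := hb
      exact ⟨v - w, by simp [Prod.mk_sub_mk, Matrix.mulVec_sub]⟩
    · rintro ⟨v, rfl⟩
      refine ⟨(X *ᵥ (fun t => max (v t) 0), Y *ᵥ (fun t => max (v t) 0)), ?_,
              (X *ᵥ (fun t => max (-v t) 0), Y *ᵥ (fun t => max (-v t) 0)), ?_, ?_⟩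
      · rw [hC]; exact ⟨_, fun t => le_max_right _ _, rfl⟩
      · rw [hC]; exact ⟨_, fun t => le_max_right _ _, rfl⟩
      · have hdecomp : (fun t => max (v t) 0) - (fun t => max (-v t) 0) = v := by
          funext t
          simp [max_zero_sub_max_neg_zero_eq_self]
        simp only [Prod.mk_sub_mk, ← Matrix.mulVec_sub, hdecomp]
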